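/- For n ≥ 2 and doubly pure elements a, b of the Cayley–Dickson algebra A_n: (3) ã·b = −(a·b)~ (this holds more generally when a is pure and b is doubly pure); and (4) ⟨a,b⟩ = 0 if and only if ã·b + b̃·a = 0. -/

import Mathlib

noncomputable section

/-- The Cayley–Dickson algebra `A n` of dimension `2^n` over `ℝ`:
`A 0 = ℝ` and `A (n+1) = A n × A n`. -/
def CD : ℕ → Type
  | 0 => ℝ
  | n + 1 => CD n × CD n

namespace CD

instance instAddCommGroup : (n : ℕ) → AddCommGroup (CD n)
  | 0 => inferInstanceAs (AddCommGroup ℝ)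
  | n + 1 =>
    letI := instAddCommGroup n
    inferInstanceAs (AddCommGroup (CD n × CD n))

instance instModule : (n : ℕ) → Module ℝ (CD n)
  | 0 => inferInstanceAs (Module ℝ ℝ)
  | n + 1 =>
    letI := instAddCommGroup n
    letI := instModule n
    inferInstanceAs (Module ℝ (CD n × CD n))

/-- Conjugation: `x̄ = x` on `ℝ` and `(x₁,x₂)‾ = (x̄₁, -x₂)`. -/
protected def conj : {n : ℕ} → CD n → CD n
  | 0, x => x
  | _ + 1, x => (CD.conj x.1, -x.2)

/-- Cayley–Dickson multiplication: `(a,b)(x,y) = (ax - ȳb, ya + bx̄)`. -/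
protected def mul : {n : ℕ} → CD n → CD n → CD n
  | 0, x, y => (show ℝ from x) * (show ℝ from y)
  | _ + 1, x, y =>
    (CD.mul x.1 y.1 - CD.mul (CD.conj y.2) x.2,
     CD.mul y.2 x.1 + CD.mul x.2 (CD.conj y.1))

instance instMul (n : ℕ) : Mul (CD n) := ⟨CD.mul⟩

/-- The multiplicative unit `e₀` of `A n`. -/
def e0 : (n : ℕ) → CD n
  | 0 => (1 : ℝ)
  | n + 1 => (e0 n, 0)

/-- The element `ẽ₀ = (0, e₀)` of `A n` (junk value `0` for `n = 0`). -/
def te0 : (n : ℕ) → CD n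
  | 0 => 0
  | n + 1 => (0, e0 n)

/-- The "complexification" `α̃ = (-b, a)` of `α = (a,b)` (junk value `0` for `n = 0`);
note `α̃ = α·ẽ₀`. -/
def tilde : {n : ℕ} → CD n → CD n
  | 0, _ => 0
  | _ + 1, x => (-x.2, x.1)

/-- The standard inner product on `A n ≅ ℝ^{2^n}`. -/
protected def inner : {n : ℕ} → CD n → CD n → ℝ
  | 0, x, y => (show ℝ from x) * (show ℝ from y)
  | _ + 1, x, y => CD.inner x.1 y.1 + CD.inner x.2 y.2

/-- The euclidean norm on `A n`. -/
protected def norm {n : ℕ} (x : CD n) : ℝ := Real.sqrt (CD.inner x x)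

/-- `x` is pure if its trace `t(x) = x + x̄` vanishes. -/
def IsPure {n : ℕ} (x : CD n) : Prop := x + CD.conj x = 0

/-- `x = (a,b)` is doubly pure if both `a` and `b` are pure
(equivalently, both `x` and `x̃` are pure). -/
def IsDoublyPure : {n : ℕ} → CD n → Prop
  | 0, x => x = 0
  | _ + 1, x => IsPure x.1 ∧ IsPure x.2

/-- The associator `(x,y,z) = (xy)z - x(yz)`. -/
def assoc {n : ℕ} (x y z : CD n) : CD n := (x * y) * z - x * (y * z)

/-- The subspace `ℍ_a`: the real span of `{e₀, ã, a, ẽ₀}`. -/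
def Ha {n : ℕ} (a : CD n) : Submodule ℝ (CD n) :=
  Submodule.span ℝ {e0 n, tilde a, a, te0 n}

/-- The orthogonal complement `ℍ_a^⊥` of `ℍ_a` in `A n`. -/
def HaPerp {n : ℕ} (a : CD n) : Set (CD n) :=
  {x | ∀ y ∈ Ha a, CD.inner x y = 0}

/-- The element `ε = (ẽ₀, 0)` of `A (n+1)`. -/
def eps (n : ℕ) : CD (n + 1) := (te0 n, 0)

/-- `α̂ = (b,a)` for `α = (a,b) ∈ A (n+1)`. -/
def hat {n : ℕ} (x : CD (n + 1)) : CD (n + 1) := (x.2, x.1)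

/-- The element `(a, b)` of `A (n+1) = A n × A n`. -/
def pair {n : ℕ} (a b : CD n) : CD (n + 1) := (a, b)

end CD

namespace CD
@[ext] lemma ext' {n : ℕ} {x y : CD (n+1)} (h1 : x.1 = y.1) (h2 : x.2 = y.2) : x = y :=
  Prod.ext h1 h2
@[simp] lemma mul_fst {n : ℕ} (x y : CD (n+1)) :
    (x * y).1 = x.1 * y.1 - CD.conj y.2 * x.2 := rfl
@[simp] lemma mul_snd {n : ℕ} (x y : CD (n+1)) :
    (x * y).2 = y.2 * x.1 + x.2 * CD.conj y.1 := rfl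
@[simp] lemma conj_fst {n : ℕ} (x : CD (n+1)) : (CD.conj x).1 = CD.conj x.1 := rfl
@[simp] lemma conj_snd {n : ℕ} (x : CD (n+1)) : (CD.conj x).2 = -x.2 := rfl
@[simp] lemma tilde_fst {n : ℕ} (x : CD (n+1)) : (tilde x).1 = -x.2 := rfl
@[simp] lemma tilde_snd {n : ℕ} (x : CD (n+1)) : (tilde x).2 = x.1 := rfl
@[simp] lemma neg_fst {n : ℕ} (x : CD (n+1)) : (-x).1 = -x.1 := rfl
@[simp] lemma neg_snd {n : ℕ} (x : CD (n+1)) : (-x).2 = -x.2 := rfl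
@[simp] lemma add_fst {n : ℕ} (x y : CD (n+1)) : (x + y).1 = x.1 + y.1 := rfl
@[simp] lemma add_snd {n : ℕ} (x y : CD (n+1)) : (x + y).2 = x.2 + y.2 := rfl
@[simp] lemma smul_fst {n : ℕ} (r : ℝ) (x : CD (n+1)) : (r • x).1 = r • x.1 := rfl
@[simp] lemma smul_snd {n : ℕ} (r : ℝ) (x : CD (n+1)) : (r • x).2 = r • x.2 := rfl
@[simp] lemma zero_fst {n : ℕ} : (0 : CD (n+1)).1 = 0 := rfl
@[simp] lemma zero_snd {n : ℕ} : (0 : CD (n+1)).2 = 0 := rfl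
@[simp] lemma e0_fst {n : ℕ} : (e0 (n+1)).1 = e0 n := rfl
@[simp] lemma e0_snd {n : ℕ} : (e0 (n+1)).2 = 0 := rfl
@[simp] lemma inner_def' {n : ℕ} (x y : CD (n+1)) :
    CD.inner x y = CD.inner x.1 y.1 + CD.inner x.2 y.2 := rfl

lemma conj_neg : ∀ {n : ℕ} (x : CD n), CD.conj (-x) = -CD.conj x
  | 0, x => rfl
  | n+1, x => by ext <;> simp [conj_neg x.1]

lemma conj_conj : ∀ {n : ℕ} (x : CD n), CD.conj (CD.conj x) = x
  | 0, x => rfl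
  | n+1, x => by ext <;> simp [conj_conj x.1]

lemma negmul : ∀ {n : ℕ} (x y : CD n), ((-x) * y = -(x * y)) ∧ (x * (-y) = -(x * y))
  | 0, x, y => ⟨neg_mul (show ℝ from x) y, mul_neg (show ℝ from x) y⟩
  | n+1, x, y => by
    have h11 := negmul x.1 y.1
    have h12 := negmul x.1 y.2
    have h21 := negmul x.2 y.1
    have h22 := negmul x.2 y.2
    have hc1 := negmul (CD.conj y.1) x.2
    have hc2 := negmul (CD.conj y.2) x.2
    have hd1 := negmul y.2 x.1
    have hd2 := negmul x.2 (CD.conj y.1)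
    constructor
    · ext <;> simp [h11.1, h21.1, hc2.2, h12.1, hd1.2, hd2.1] <;> abel
    · ext <;> simp [conj_neg, h11.2, hc2.1, h21.1, h22.1, h12.2, hc1.1, hd1.1, hd2.2] <;> abel

lemma neg_mul' {n : ℕ} (x y : CD n) : (-x) * y = -(x * y) := (negmul x y).1
lemma mul_neg' {n : ℕ} (x y : CD n) : x * (-y) = -(x * y) := (negmul x y).2
end CD

namespace CD

lemma key : ∀ {n : ℕ} (x y : CD n),
    (x * CD.conj y + y * CD.conj x = (2 * CD.inner x y) • e0 n) ∧
    (CD.conj x * y + CD.conj y * x = (2 * CD.inner x y) • e0 n)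
  | 0, x, y => by
    constructor <;>
    · show (show ℝ from x) * (show ℝ from y) + (show ℝ from y) * (show ℝ from x) = ((2 : ℝ) * ((show ℝ from x) * (show ℝ from y))) • (1 : ℝ)
      rw [smul_eq_mul]; ring
  | n+1, x, y => by
    have h11 := (key x.1 y.1).1
    have h12 := (key x.1 y.1).2
    have h22 := (key x.2 y.2).2
    constructor
    · ext
      · simp only [add_fst, mul_fst, conj_fst, conj_snd, conj_neg, conj_conj,
          neg_mul', mul_neg', smul_fst, e0_fst, inner_def', mul_add, add_smul,
          ← h11, ← h22]
        abel
      · simp only [add_snd, mul_snd, conj_fst, conj_snd, conj_conj,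
          neg_mul', mul_neg', smul_snd, e0_snd, smul_zero]
        abel
    · ext
      · simp only [add_fst, mul_fst, conj_fst, conj_snd, conj_neg, conj_conj,
          neg_mul', mul_neg', smul_fst, e0_fst, inner_def', mul_add, add_smul,
          ← h12, ← h22]
        abel
      · simp only [add_snd, mul_snd, conj_fst, conj_snd, conj_conj,
          neg_mul', mul_neg', smul_snd, e0_snd, smul_zero]
        abel

lemma conj_eq_neg {n : ℕ} {x : CD n} (h : IsPure x) : CD.conj x = -x :=
  eq_neg_of_add_eq_zero_right h

lemma pure_mul_add {n : ℕ} {x y : CD n} (hx : IsPure x) (hy : IsPure y) :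
    x * y + y * x = -((2 * CD.inner x y) • e0 n) := by
  have h := (key x y).1
  rw [conj_eq_neg hx, conj_eq_neg hy, mul_neg', mul_neg'] at h
  rw [← neg_eq_iff_eq_neg, ← h]; abel

lemma e0_smul_eq_zero : ∀ {n : ℕ} {r : ℝ}, r • e0 n = 0 → r = 0
  | 0, r, h => by have h' : r * 1 = 0 := h; simpa using h'
  | n+1, r, h => e0_smul_eq_zero (by simpa only [smul_fst, e0_fst, zero_fst] using congrArg Prod.fst h)

end CD

/-- For `n ≥ 2`:
(3) `ã·b = -(a·b)~` whenever `a` is pure and `b` is doubly pure (in particular for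
`a`, `b` both doubly pure);
(4) for doubly pure `a`, `b`: `⟨a,b⟩ = 0 ↔ ã·b + b̃·a = 0`. -/
theorem statement1 (n : ℕ) (hn : 2 ≤ n) :
    (∀ a b : CD n, CD.IsPure a → CD.IsDoublyPure b →
      CD.tilde a * b = -CD.tilde (a * b)) ∧
    (∀ a b : CD n, CD.IsDoublyPure a → CD.IsDoublyPure b →
      (CD.inner a b = 0 ↔ CD.tilde a * b + CD.tilde b * a = 0)) := by
  obtain ⟨m, rfl⟩ : ∃ m, n = m + 1 := ⟨n - 1, by omega⟩
  constructor
  · rintro a b _ ⟨hb1, hb2⟩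
    ext <;>
      simp only [CD.mul_fst, CD.mul_snd, CD.tilde_fst, CD.tilde_snd, CD.neg_fst, CD.neg_snd,
        CD.conj_eq_neg hb1, CD.conj_eq_neg hb2, CD.neg_mul', CD.mul_neg'] <;> abel
  · rintro a b ⟨ha1, ha2⟩ ⟨hb1, hb2⟩
    have h1 := CD.pure_mul_add ha1 hb1
    have h2 := CD.pure_mul_add ha2 hb2
    have hsum : CD.tilde a * b + CD.tilde b * a
        = ((0 : CD m), (2 * CD.inner a b) • CD.e0 m) := by
      ext
      · simp only [CD.add_fst, CD.mul_fst, CD.tilde_fst, CD.tilde_snd,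
          CD.conj_eq_neg ha1, CD.conj_eq_neg ha2, CD.conj_eq_neg hb1, CD.conj_eq_neg hb2,
          CD.neg_mul', CD.mul_neg']
        abel
      · simp only [CD.add_snd, CD.mul_snd, CD.tilde_fst, CD.tilde_snd,
          CD.conj_eq_neg ha1, CD.conj_eq_neg ha2, CD.conj_eq_neg hb1, CD.conj_eq_neg hb2,
          CD.neg_mul', CD.mul_neg', CD.inner_def', mul_add, add_smul]
        rw [show ((2 * CD.inner a.1 b.1) • CD.e0 m) = -(a.1 * b.1 + b.1 * a.1) by
              rw [h1, neg_neg],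
            show ((2 * CD.inner a.2 b.2) • CD.e0 m) = -(a.2 * b.2 + b.2 * a.2) by
              rw [h2, neg_neg]]
        abel
    rw [hsum]
    constructor
    · intro h; rw [h]; ext <;> simp
    · intro h
      have h2' : (2 * CD.inner a b) • CD.e0 m = 0 := by
        simpa using congrArg Prod.snd h
      have := CD.e0_smul_eq_zero h2'
      linarith
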